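/- Let G be a finite group of odd order, let A ≤ G be a normal abelian subgroup, and let r be the number of orbits of the conjugation action of G on Irr(A) \ {1_A}. Then r is even. -/

import Mathlib

/-- The set of irreducible complex characters of `G`. -/
noncomputable def Irr (G : Type) [Group G] : Set (G → ℂ) :=
  {χ | ∃ V : FDRep ℂ G, CategoryTheory.Simple V ∧ V.character = χ}

open CategoryTheory Module

section helpers
variable {H : Type} [Group H]

/-- Restriction of a representation to an invariant submodule. -/
noncomputable def subrep (V : FDRep ℂ H) (p : Submodule ℂ V)
    (hp : ∀ h : H, ∀ x ∈ p, V.ρ h x ∈ p) : FDRep ℂ H :=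
  FDRep.of (V := p)
    { toFun := fun h => (V.ρ h).restrict (fun x hx => hp h x hx)
      map_one' := by ext x; simp [LinearMap.restrict_apply]
      map_mul' := fun g h => by ext x; simp [LinearMap.restrict_apply] }

noncomputable def subrepIncl (V : FDRep ℂ H) (p : Submodule ℂ V)
    (hp : ∀ h : H, ∀ x ∈ p, V.ρ h x ∈ p) : subrep V p hp ⟶ V where
  hom := FGModuleCat.ofHom p.subtype
  comm := fun g => by ext x; rfl

example {V W : FDRep ℂ H} (f : V ⟶ W) (h : H) (x : V) :
    f.hom (V.ρ h x) = W.ρ h (f.hom x) :=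
  LinearMap.congr_fun (congrArg (fun φ => φ.hom.hom) (f.comm h)) x

theorem mono_inj {V W : FDRep ℂ H} (f : V ⟶ W) [Mono f] : Function.Injective f.hom := by
  rw [← LinearMap.ker_eq_bot]
  have hker : ∀ h : H, ∀ x ∈ LinearMap.ker f.hom.hom.hom, V.ρ h x ∈ LinearMap.ker f.hom.hom.hom := by
    intro h x hx
    have h2 : f.hom (V.ρ h x) = W.ρ h (f.hom x) :=
      LinearMap.congr_fun (congrArg (fun φ => φ.hom.hom) (f.comm h)) x
    simp only [LinearMap.mem_ker] at hx ⊢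
    exact h2.trans (by rw [show f.hom x = 0 from hx, map_zero])
  set K := subrep V _ hker
  have hcomp : subrepIncl V _ hker ≫ f = 0 := by
    ext x
    exact x.2
  have h0 : subrepIncl V _ hker = 0 := by
    exact (cancel_mono f).mp (hcomp.trans (by simp))
  rw [eq_bot_iff]
  intro x hx
  have := congrArg (fun (g : K ⟶ V) => g.hom ⟨x, hx⟩) h0
  exact this
end helpers

section helpers2
variable {H : Type} [Group H]

theorem isIso_of_bij {V W : FDRep ℂ H} (f : V ⟶ W) (hb : Function.Bijective f.hom) :
    IsIso f := by
  let e : V ≃ₗ[ℂ] W := LinearEquiv.ofBijective f.hom.hom.hom hb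
  refine ⟨⟨⟨FGModuleCat.ofHom (e.symm : W →ₗ[ℂ] V), fun g => ?_⟩, ?_, ?_⟩⟩
  · ext x
    show e.symm (W.ρ g x) = V.ρ g (e.symm x)
    rw [e.symm_apply_eq]
    have h1 : f.hom (V.ρ g (e.symm x)) = W.ρ g (f.hom (e.symm x)) :=
      LinearMap.congr_fun (congrArg (fun φ => φ.hom.hom) (f.comm g)) _
    have h2 : f.hom (e.symm x) = x := e.apply_symm_apply x
    exact (h1.trans (by rw [h2])).symm
  · ext x
    show e.symm (e x) = x
    exact e.symm_apply_apply x
  · ext x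
    show e (e.symm x) = x
    exact e.apply_symm_apply x
end helpers2

section helpers3
variable {H : Type} [Group H]

theorem hom_eq_zero_iff {V W : FDRep ℂ H} (f : V ⟶ W) : f = 0 ↔ f.hom = 0 := by
  constructor
  · rintro rfl; rfl
  · intro h; ext x; exact congrFun (congrArg (fun (g : V.V ⟶ W.V) => (g.hom.hom : V → W)) h) x

theorem simple_of_finrank_one (X : FDRep ℂ H) (h1 : finrank ℂ X = 1) : Simple X := by
  have : Nontrivial X := Module.nontrivial_of_finrank_pos (R := ℂ) (by omega)
  constructor
  intro Y f hm
  constructor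
  · intro hiso h0
    have : (𝟙 X : X ⟶ X) = 0 := by
      have h2 := congrArg (fun g => CategoryTheory.inv f ≫ g) h0
      simp only [Limits.comp_zero] at h2
      rw [← CategoryTheory.IsIso.inv_hom_id f, h2]
    obtain ⟨x, y, hxy⟩ := exists_pair_ne X
    apply hxy
    have hx : ∀ z : X, z = 0 := by
      intro z
      have := congrFun (congrArg (fun (g : X.V ⟶ X.V) => (g.hom.hom : X → X)) ((hom_eq_zero_iff _).mp this)) z
      simpa using this
    rw [hx x, hx y]
  · intro hne
    have hinj : Function.Injective f.hom := mono_inj f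
    have hfh : f.hom ≠ 0 := fun h => hne ((hom_eq_zero_iff f).mpr h)
    have hsurj : Function.Surjective f.hom := by
      rw [← LinearMap.range_eq_top]
      have hbot : LinearMap.range f.hom.hom.hom ≠ ⊥ := by
        intro h
        apply hfh
        ext z
        have : f.hom z ∈ LinearMap.range f.hom.hom.hom := ⟨z, rfl⟩
        rw [h] at this
        simp at this ⊢; exact this
      apply Submodule.eq_top_of_finrank_eq
      show finrank ℂ (LinearMap.range f.hom.hom.hom) = finrank ℂ X
      rw [h1]
      have hle : finrank ℂ (LinearMap.range f.hom.hom.hom) ≤ 1 := h1 ▸ Submodule.finrank_le _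
      have hpos : 0 < finrank ℂ (LinearMap.range f.hom.hom.hom) := by
        have : Nontrivial (LinearMap.range f.hom.hom.hom) := by
          rcases Submodule.ne_bot_iff _ |>.mp hbot with ⟨x, hx, hx0⟩
          exact ⟨⟨⟨x, hx⟩, 0, by simpa using hx0⟩⟩
        exact Module.finrank_pos
      omega
    exact isIso_of_bij f ⟨hinj, hsurj⟩

theorem exists_scalar (hcomm : ∀ x y : H, x * y = y * x) (V : FDRep ℂ H) [Simple V] (a : H) :
    ∃ c : ℂ, V.ρ a = c • (LinearMap.id : V →ₗ[ℂ] V) := by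
  let ea : V ⟶ V :=
    { hom := FGModuleCat.ofHom (V.ρ a)
      comm := fun g => by
        ext x
        show (V.ρ a).comp (V.ρ g) x = (V.ρ g).comp (V.ρ a) x
        rw [← Module.End.mul_eq_comp, ← Module.End.mul_eq_comp, ← map_mul, ← map_mul, hcomm] }
  obtain ⟨c, hc⟩ := CategoryTheory.endomorphism_simple_eq_smul_id (𝕜 := ℂ) ea
  refine ⟨c, ?_⟩
  have := congrArg (fun φ => φ.hom.hom) (congrArg Action.Hom.hom hc)
  exact this.symm
end helpers3

section helpers4
variable {H : Type} [Group H]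

theorem finrank_simple_comm (hcomm : ∀ x y : H, x * y = y * x) (V : FDRep ℂ H) [Simple V] :
    finrank ℂ V = 1 := by
  have hnz : (𝟙 V : V ⟶ V) ≠ 0 := CategoryTheory.id_nonzero V
  have hnt : Nontrivial V := by
    by_contra h
    rw [not_nontrivial_iff_subsingleton] at h
    exact hnz (by ext x; exact h.elim _ _)
  obtain ⟨v, hv⟩ := exists_ne (0 : V)
  have hp : ∀ h : H, ∀ x ∈ (ℂ ∙ v), V.ρ h x ∈ (ℂ ∙ v) := by
    intro h x hx
    obtain ⟨c, hc⟩ := exists_scalar hcomm V h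
    rw [hc]
    simpa using Submodule.smul_mem _ c hx
  have hmono : Mono (subrepIncl V _ hp) := by
    constructor
    intro Z g h w
    ext x
    have h2 := congrFun (congrArg (fun (q : Z ⟶ V) => (q.hom.hom.hom : Z → V)) w) x
    exact Subtype.ext h2
  have hne : subrepIncl V _ hp ≠ 0 := by
    intro h
    apply hv
    have h2 := congrFun (congrArg (fun (q : subrep V _ hp ⟶ V) => (q.hom.hom.hom : _ → V)) h)
      ⟨v, Submodule.mem_span_singleton_self v⟩
    exact h2
  have hiso : IsIso (subrepIncl V _ hp) := isIso_of_mono_of_nonzero hne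
  have he := FDRep.isoToLinearEquiv (asIso (subrepIncl V _ hp))
  rw [← he.finrank_eq]
  show finrank ℂ (ℂ ∙ v) = 1
  exact finrank_span_singleton hv

theorem irr_hom (hcomm : ∀ x y : H, x * y = y * x) {θ : H → ℂ} (hθ : θ ∈ Irr H) :
    θ 1 = 1 ∧ ∀ a b : H, θ (a * b) = θ a * θ b := by
  obtain ⟨V, hs, rfl⟩ := hθ
  haveI := hs
  have hfr := finrank_simple_comm hcomm V
  have key : ∀ a : H, V.ρ a = V.character a • (LinearMap.id : V →ₗ[ℂ] V) := by
    intro a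
    obtain ⟨c, hc⟩ := exists_scalar hcomm V a
    have hca : V.character a = c := by
      show LinearMap.trace ℂ V (V.ρ a) = c
      rw [hc, map_smul, LinearMap.trace_id]
      rw [hfr]
      simp
    rw [hca, hc]
  have hnt : Nontrivial V := Module.nontrivial_of_finrank_pos (R := ℂ) (by omega)
  obtain ⟨v, hv⟩ := exists_ne (0 : V)
  constructor
  · rw [FDRep.char_one, hfr]
    simp
  · intro a b
    apply smul_left_injective ℂ hv
    show V.character (a * b) • v = (V.character a * V.character b) • v
    have e1 : V.character (a * b) • v = V.ρ (a * b) v := by rw [key (a * b)]; rfl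
    have e2 : V.ρ (a * b) v = V.ρ a (V.ρ b v) := by rw [map_mul]; rfl
    have e3 : V.ρ b v = V.character b • v := by rw [key b]; rfl
    have e5 : V.ρ a v = V.character a • v := by rw [key a]; rfl
    rw [e1, e2, e3, map_smul, e5, smul_smul, mul_comm]
end helpers4

section helpers5
variable {H : Type} [Group H]

theorem inv_mem_irr (hcomm : ∀ x y : H, x * y = y * x) {θ : H → ℂ} (hθ : θ ∈ Irr H) :
    (fun a => θ a⁻¹) ∈ Irr H := by
  obtain ⟨h1, hmul⟩ := irr_hom hcomm hθ
  let ρ : Representation ℂ H ℂ :=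
    { toFun := fun a => θ a⁻¹ • (LinearMap.id : ℂ →ₗ[ℂ] ℂ)
      map_one' := by show θ 1⁻¹ • LinearMap.id = 1; rw [inv_one, h1, one_smul]; rfl
      map_mul' := fun a b => by
        apply LinearMap.ext
        intro x
        simp only [LinearMap.smul_apply, LinearMap.id_apply, Module.End.mul_apply,
          mul_inv_rev, hmul, smul_eq_mul]
        ring }
  refine ⟨FDRep.of ρ, simple_of_finrank_one _ ?_, ?_⟩
  · show finrank ℂ ℂ = 1
    simp
  · funext a
    show LinearMap.trace ℂ ℂ (ρ a) = θ a⁻¹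
    show LinearMap.trace ℂ ℂ (θ a⁻¹ • LinearMap.id) = θ a⁻¹
    rw [map_smul, LinearMap.trace_id]
    simp
end helpers5

/-- The average character degree of `G`. -/
noncomputable def acd (G : Type) [Group G] : ℝ :=
  (∑ᶠ χ ∈ Irr G, (χ 1).re) / (Nat.card (Irr G) : ℝ)

/-- The conjugation relation on characters of a normal subgroup A. -/
def conjRel {G : Type} [Group G] (A : Subgroup G) (hA : A.Normal)
    (θ₁ θ₂ : A → ℂ) : Prop :=
  ∃ g : G, ∀ a : A, θ₂ a = θ₁ ⟨g * a * g⁻¹, hA.conj_mem a a.2 g⟩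

theorem even_orbits_of_odd_order (G : Type) [Group G] [Finite G]
    (hodd : Odd (Nat.card G)) (A : Subgroup G) (hA : A.Normal)
    (hab : ∀ x y : A, x * y = y * x)
    (S : Set (A → ℂ)) (hS : S = {θ ∈ Irr A | θ ≠ fun _ => (1 : ℂ)})
    (r : ℕ) (hr : r = Nat.card (Quot (fun θ₁ θ₂ : S => conjRel A hA θ₁.1 θ₂.1))) :
    Even r := by
  classical
  subst hS hr
  set T : Set (↥A → ℂ) := {θ ∈ Irr ↥A | θ ≠ fun _ => (1 : ℂ)} with hT
  set rel := fun θ₁ θ₂ : T => conjRel A hA θ₁.1 θ₂.1 with hrel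
  cases finite_or_infinite (Quot rel) with
  | inr h => rw [Nat.card_eq_zero_of_infinite]; exact Even.zero
  | inl h =>
  -- the conjugation action
  let cA : G → ↥A → ↥A := fun g a => ⟨g * a * g⁻¹, hA.conj_mem a a.2 g⟩
  have cA_mul : ∀ (g g' : G) (a : ↥A), cA g (cA g' a) = cA (g * g') a := by
    intro g g' a
    apply Subtype.ext
    show g * (g' * a * g'⁻¹) * g⁻¹ = (g * g') * a * (g * g')⁻¹
    group
  have cA_inv : ∀ (g : G) (a : ↥A), (cA g a)⁻¹ = cA g a⁻¹ := by
    intro g a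
    apply Subtype.ext
    show (g * (a : G) * g⁻¹)⁻¹ = g * ((a : G))⁻¹ * g⁻¹
    group
  have hconj : ∀ (θ₁ θ₂ : ↥A → ℂ), conjRel A hA θ₁ θ₂ ↔ ∃ g, ∀ a, θ₂ a = θ₁ (cA g a) :=
    fun θ₁ θ₂ => Iff.rfl
  have hequiv : Equivalence rel := by
    constructor
    · rintro ⟨θ, hθ⟩
      refine ⟨1, fun a => ?_⟩
      show θ a = θ (cA 1 a)
      congr 1
      apply Subtype.ext
      simp [cA]
    · rintro ⟨θ₁, h₁⟩ ⟨θ₂, h₂⟩ ⟨g, hg⟩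
      refine ⟨g⁻¹, fun a => ?_⟩
      show θ₁ a = θ₂ (cA g⁻¹ a)
      have h3 : θ₂ (cA g⁻¹ a) = θ₁ (cA g (cA g⁻¹ a)) := hg (cA g⁻¹ a)
      rw [h3, cA_mul]
      congr 1
      apply Subtype.ext
      simp [cA]
    · rintro ⟨θ₁, h₁⟩ ⟨θ₂, h₂⟩ ⟨θ₃, h₃⟩ ⟨g, hg⟩ ⟨g', hg'⟩
      refine ⟨g * g', fun a => ?_⟩
      show θ₃ a = θ₁ (cA (g * g') a)
      rw [← cA_mul]
      exact (hg' a).trans (hg (cA g' a))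
  -- the involution
  have hT' : ∀ θ : ↥T, (fun a : ↥A => θ.1 a⁻¹) ∈ T := by
    rintro ⟨θ, hI, hne⟩
    refine ⟨inv_mem_irr hab hI, ?_⟩
    intro hcon
    apply hne
    funext a
    have := congrFun hcon a⁻¹
    simpa using this
  let ι : ↥T → ↥T := fun θ => ⟨fun a => θ.1 a⁻¹, hT' θ⟩
  have hιι : ∀ θ, ι (ι θ) = θ := fun θ => Subtype.ext (funext fun a => by simp [ι])
  have hcompat : ∀ θ₁ θ₂, rel θ₁ θ₂ → rel (ι θ₁) (ι θ₂) := by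
    rintro ⟨θ₁, h₁⟩ ⟨θ₂, h₂⟩ ⟨g, hg⟩
    refine ⟨g, fun a => ?_⟩
    show θ₂ a⁻¹ = θ₁ (cA g a)⁻¹
    rw [cA_inv]
    exact hg a⁻¹
  let F : Quot rel → Quot rel := Quot.map ι hcompat
  have hFinv : ∀ q, F (F q) = q := by
    apply Quot.ind
    intro θ
    show Quot.mk rel (ι (ι θ)) = Quot.mk rel θ
    rw [hιι]
  -- no fixed points
  have hnofix : ∀ q, F q ≠ q := by
    apply Quot.ind
    intro θ hfix
    have hrel' : rel (ι θ) θ :=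
      (Equivalence.eqvGen_iff hequiv).mp (Quot.eqvGen_exact hfix)
    obtain ⟨g, hg⟩ := hrel'
    obtain ⟨hIrr, hne1⟩ := θ.2
    obtain ⟨hθ1, hθmul⟩ := irr_hom hab hIrr
    have H1 : ∀ a, θ.1 a = θ.1 (cA g a⁻¹) := fun a =>
      (hg a).trans (congrArg θ.1 (cA_inv g a))
    have H2 : ∀ a, θ.1 a = θ.1 (cA (g * g) a) := by
      intro a
      have h1 := H1 a
      have h2 := H1 (cA g a⁻¹)
      have h3 : cA g ((cA g a⁻¹)⁻¹) = cA (g * g) a := by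
        rw [cA_inv, inv_inv, cA_mul]
      rw [h3] at h2
      exact h1.trans h2
    have Hpow : ∀ (n : ℕ) (a : ↥A), θ.1 a = θ.1 (cA ((g * g) ^ n) a) := by
      intro n
      induction n with
      | zero =>
        intro a
        have : cA ((g * g) ^ 0) a = a := Subtype.ext (by simp [cA])
        rw [this]
      | succ n ih =>
        intro a
        rw [pow_succ', ← cA_mul]
        exact (ih a).trans (H2 (cA ((g * g) ^ n) a))
    obtain ⟨k, hk⟩ := Odd.of_dvd_nat hodd (orderOf_dvd_natCard g)
    have hgg : (g * g) ^ (k + 1) = g := by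
      rw [← sq, ← pow_mul]
      have : 2 * (k + 1) = orderOf g + 1 := by omega
      rw [this, pow_succ, pow_orderOf_eq_one, one_mul]
    have H3 : ∀ a, θ.1 a = θ.1 (cA g a) := fun a => by
      have := Hpow (k + 1) a
      rwa [hgg] at this
    have Hinv : ∀ a, θ.1 a = θ.1 a⁻¹ := fun a => (H1 a).trans (H3 a⁻¹).symm
    have Hsq : ∀ a : ↥A, θ.1 (a * a) = 1 := by
      intro a
      rw [hθmul]
      nth_rewrite 2 [Hinv a]
      rw [← hθmul, mul_inv_cancel, hθ1]
    apply hne1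
    funext b
    obtain ⟨m, hm⟩ := Odd.of_dvd_nat hodd (Subgroup.card_subgroup_dvd_card A)
    have hb : b ^ (m + 1) * b ^ (m + 1) = b := by
      rw [← pow_add]
      have : m + 1 + (m + 1) = Nat.card ↥A + 1 := by omega
      rw [this, pow_succ, pow_card_eq_one', one_mul]
    calc θ.1 b = θ.1 (b ^ (m + 1) * b ^ (m + 1)) := by rw [hb]
    _ = 1 := Hsq _
  -- conclude evenness
  haveI := Fintype.ofFinite (Quot rel)
  haveI : Fact (Nat.Prime 2) := ⟨Nat.prime_two⟩
  let Fe : Function.End (Quot rel) := F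
  have hf2 : Fe ^ 2 ^ 1 = 1 := by
    have h21 : Fe ^ 2 ^ 1 = Fe * Fe := by norm_num [pow_two]
    rw [h21]
    funext q
    exact hFinv q
  have hmod := Equiv.Perm.card_fixedPoints_modEq (f := Fe) (p := 2) (n := 1) hf2
  have hfp : Fintype.card (Function.fixedPoints Fe) = 0 := by
    rw [Fintype.card_eq_zero_iff]
    constructor
    rintro ⟨q, hq⟩
    exact hnofix q hq
  rw [hfp] at hmod
  rw [Nat.card_eq_fintype_card]
  exact (even_iff_two_dvd).mpr ((Nat.modEq_zero_iff_dvd).mp hmod)
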